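/- Let K, L ⊆ ℝⁿ be compact sets and U ⊆ ℝⁿ a linear subspace. Then conv(K) ∩ conv(L) ∩ U = ∅ if and only if there exist a ∈ U and v, w ∈ U^⊥ such that ⟨a+v, x⟩ < ⟨a+w, y⟩ for all x ∈ K and y ∈ L. -/

import Mathlib

open scoped RealInnerProductSpace

lemma aux_isCompact_convexHull {n : ℕ} {K : Set (EuclideanSpace ℝ (Fin n))}
    (hK : IsCompact K) : IsCompact (convexHull ℝ K) := by
  rcases K.eq_empty_or_nonempty with rfl | ⟨k0, hk0⟩
  · simp [convexHull_empty]
  set N := n + 1 with hN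
  set T : Set ((Fin N → ℝ) × (Fin N → (EuclideanSpace ℝ (Fin n)))) :=
    (stdSimplex ℝ (Fin N)) ×ˢ (Set.pi Set.univ fun _ => K) with hT
  have hTcomp : IsCompact T :=
    IsCompact.prod (isCompact_stdSimplex (𝕜 := ℝ) ..) (isCompact_univ_pi fun _ => hK)
  set φ : (Fin N → ℝ) × (Fin N → (EuclideanSpace ℝ (Fin n))) → (EuclideanSpace ℝ (Fin n)) := fun p => ∑ i, p.1 i • p.2 i with hφ
  have hφcont : Continuous φ :=
    continuous_finset_sum _ fun i _ =>
      ((continuous_apply i).comp continuous_fst).smul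
        ((continuous_apply i).comp continuous_snd)
  have key : convexHull ℝ K = φ '' T := by
    apply Set.Subset.antisymm
    · intro x hx
      obtain ⟨ι, hfin, z, w, hzK, haff, hwpos, hwsum, hx⟩ :=
        eq_pos_convex_span_of_mem_convexHull hx
      have hcard : Fintype.card ι ≤ N := by
        have h1 := haff.card_le_finrank_succ
        have h2 : Module.finrank ℝ (vectorSpan ℝ (Set.range z)) ≤ n := by
          have := Submodule.finrank_le (vectorSpan ℝ (Set.range z))
          simpa [finrank_euclideanSpace_fin] using this
        omega
      obtain ⟨g⟩ : Nonempty (ι ↪ Fin N) := by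
        rw [Function.Embedding.nonempty_iff_card_le]
        simpa using hcard
      classical
      set w' : Fin N → ℝ := Function.extend g w 0 with hw'
      set z' : Fin N → (EuclideanSpace ℝ (Fin n)) := Function.extend g z (fun _ => k0) with hz'
      have hwg : ∀ j, w' (g j) = w j := fun j => g.injective.extend_apply _ _ _
      have hzg : ∀ j, z' (g j) = z j := fun j => g.injective.extend_apply _ _ _
      have hout : ∀ i : Fin N, i ∉ Finset.univ.map g → w' i = 0 ∧ z' i = k0 := by
        intro i hi
        have hne : ¬∃ j, g j = i := by
          rintro ⟨j, rfl⟩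
          exact hi (Finset.mem_map.mpr ⟨j, Finset.mem_univ _, rfl⟩)
        exact ⟨Function.extend_apply' _ _ _ hne, Function.extend_apply' _ _ _ hne⟩
      refine ⟨(w', z'), ⟨⟨?_, ?_⟩, ?_⟩, ?_⟩
      · intro i
        show 0 ≤ w' i
        by_cases hi : i ∈ Finset.univ.map g
        · obtain ⟨j, _, rfl⟩ := Finset.mem_map.mp hi
          rw [hwg]; exact (hwpos j).le
        · rw [(hout i hi).1]
      · rw [← Finset.sum_subset (Finset.subset_univ (Finset.univ.map g))
          (fun i _ hi => (hout i hi).1)]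
        rw [Finset.sum_map]
        simpa [hwg] using hwsum
      · intro i _
        show z' i ∈ K
        by_cases hi : i ∈ Finset.univ.map g
        · obtain ⟨j, _, rfl⟩ := Finset.mem_map.mp hi
          rw [hzg]; exact hzK ⟨j, rfl⟩
        · rw [(hout i hi).2]; exact hk0
      · show (∑ i, w' i • z' i) = x
        rw [← Finset.sum_subset (Finset.subset_univ (Finset.univ.map g))
          (fun i _ hi => by rw [(hout i hi).1, zero_smul])]
        rw [Finset.sum_map]
        calc (∑ j, w' (g j) • z' (g j)) = ∑ j, w j • z j := by
              refine Finset.sum_congr rfl fun j _ => by rw [hwg, hzg]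
          _ = x := hx
    · rintro _ ⟨⟨w, z⟩, ⟨⟨hw0, hw1⟩, hzK⟩, rfl⟩
      exact (convex_convexHull ℝ K).sum_mem (fun i _ => hw0 i) hw1
        (fun i _ => subset_convexHull ℝ K (hzK i (Set.mem_univ i)))
  rw [key]
  exact hTcomp.image hφcont

theorem stmt_5 {n : ℕ} (K L : Set (EuclideanSpace ℝ (Fin n)))
    (hK : IsCompact K) (hL : IsCompact L) (U : Submodule ℝ (EuclideanSpace ℝ (Fin n))) :
    convexHull ℝ K ∩ convexHull ℝ L ∩ (U : Set (EuclideanSpace ℝ (Fin n))) = ∅ ↔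
      ∃ a ∈ U, ∃ v ∈ Uᗮ, ∃ w ∈ Uᗮ,
        ∀ x ∈ K, ∀ y ∈ L, ⟪a + v, x⟫ < ⟪a + w, y⟫ := by
  constructor
  · intro hdisj
    set A := convexHull ℝ K with hA
    set B := convexHull ℝ L with hB
    set Δ : Submodule ℝ (EuclideanSpace ℝ (Fin n) × EuclideanSpace ℝ (Fin n)) := U.map (LinearMap.prod LinearMap.id LinearMap.id) with hΔ
    have hΔclosed : IsClosed (Δ : Set (EuclideanSpace ℝ (Fin n) × EuclideanSpace ℝ (Fin n))) := Δ.closed_of_finiteDimensional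
    have hABconv : Convex ℝ (A ×ˢ B) := (convex_convexHull ℝ K).prod (convex_convexHull ℝ L)
    have hABcomp : IsCompact (A ×ˢ B) :=
      (aux_isCompact_convexHull hK).prod (aux_isCompact_convexHull hL)
    have hdisj2 : Disjoint (A ×ˢ B) (Δ : Set (EuclideanSpace ℝ (Fin n) × EuclideanSpace ℝ (Fin n))) := by
      rw [Set.disjoint_left]
      rintro ⟨x, y⟩ ⟨hx, hy⟩ hxy
      obtain ⟨u, hu, huv⟩ := hxy
      simp only [LinearMap.prod_apply, LinearMap.id_coe, id_eq, Function.prod, Prod.mk.injEq] at huv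
      obtain ⟨h1, h2⟩ := huv
      have : u ∈ A ∩ B ∩ (U : Set (EuclideanSpace ℝ (Fin n))) := ⟨⟨h1 ▸ hx, h2 ▸ hy⟩, hu⟩
      rw [hdisj] at this
      exact this.elim
    obtain ⟨f, s, t, hfs, hst, hft⟩ :=
      geometric_hahn_banach_compact_closed hABconv hABcomp Δ.convex hΔclosed hdisj2
    -- f vanishes on Δ
    have hf0 : ∀ z ∈ Δ, f z = 0 := by
      intro z hz
      by_contra hne
      have h1 : t < f (((t - 1) / f z) • z) := hft _ (Δ.smul_mem _ hz)
      rw [map_smul] at h1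
      simp only [smul_eq_mul] at h1
      rw [div_mul_cancel₀ _ hne] at h1
      linarith
    have ht0 : t < 0 := by
      have := hft 0 Δ.zero_mem
      rw [map_zero] at this
      linarith
    -- decompose f
    set p : (EuclideanSpace ℝ (Fin n)) := (InnerProductSpace.toDual ℝ (EuclideanSpace ℝ (Fin n))).symm
      (f.comp (ContinuousLinearMap.inl ℝ (EuclideanSpace ℝ (Fin n)) (EuclideanSpace ℝ (Fin n)))) with hp
    set q : (EuclideanSpace ℝ (Fin n)) := (InnerProductSpace.toDual ℝ (EuclideanSpace ℝ (Fin n))).symm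
      (f.comp (ContinuousLinearMap.inr ℝ (EuclideanSpace ℝ (Fin n)) (EuclideanSpace ℝ (Fin n)))) with hq
    have hpx : ∀ x : EuclideanSpace ℝ (Fin n), ⟪p, x⟫ = f (x, 0) := fun x => by
      rw [hp, InnerProductSpace.toDual_symm_apply]; rfl
    have hqy : ∀ y : EuclideanSpace ℝ (Fin n), ⟪q, y⟫ = f (0, y) := fun y => by
      rw [hq, InnerProductSpace.toDual_symm_apply]; rfl
    have hsplit : ∀ x y : EuclideanSpace ℝ (Fin n), f (x, y) = ⟪p, x⟫ + ⟪q, y⟫ := by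
      intro x y
      rw [hpx, hqy, ← map_add]
      norm_num
    have hpqU : p + q ∈ Uᗮ := by
      rw [Submodule.mem_orthogonal]
      intro u hu
      rw [real_inner_comm, inner_add_left, hpx, hqy, ← map_add]
      have : ((u, 0) : EuclideanSpace ℝ (Fin n) × EuclideanSpace ℝ (Fin n)) + (0, u) = (u, u) := by simp
      rw [this]
      exact hf0 (u, u) ⟨u, hu, rfl⟩
    set a : (EuclideanSpace ℝ (Fin n)) := (U.orthogonalProjectionOnto p : (EuclideanSpace ℝ (Fin n))) with ha
    have haU : a ∈ U := (U.orthogonalProjectionOnto p).2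
    have hvU : p - a ∈ Uᗮ := Submodule.sub_starProjection_mem_orthogonal p
    have hproj : U.orthogonalProjectionOnto (-q) = U.orthogonalProjectionOnto p := by
      have h0 : U.orthogonalProjectionOnto (p + q) = 0 :=
        Submodule.orthogonalProjectionOnto_apply_of_mem_orthogonal hpqU
      have := map_add (U.orthogonalProjectionOnto) p q
      rw [h0] at this
      rw [map_neg]
      exact neg_eq_of_add_eq_zero_left this.symm
    have hwU : -q - a ∈ Uᗮ := by
      have := Submodule.sub_starProjection_mem_orthogonal (K := U) (-q)
      rw [Submodule.starProjection_apply] at this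
      rwa [hproj] at this
    refine ⟨a, haU, p - a, hvU, -q - a, hwU, ?_⟩
    intro x hx y hy
    have h1 : a + (p - a) = p := by abel
    have h2 : a + (-q - a) = -q := by abel
    rw [h1, h2]
    have hfxy : f (x, y) < 0 := by
      have := hfs (x, y) ⟨subset_convexHull ℝ K hx, subset_convexHull ℝ L hy⟩
      linarith
    rw [hsplit] at hfxy
    rw [inner_neg_left]
    linarith
  · rintro ⟨a, haU, v, hvU, w, hwU, hsep⟩
    rw [Set.eq_empty_iff_forall_notMem]
    rintro z ⟨⟨hzK, hzL⟩, hzU⟩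
    have hKne : K.Nonempty := by
      exact convexHull_nonempty_iff.mp ⟨z, hzK⟩
    have hLne : L.Nonempty := by
      exact convexHull_nonempty_iff.mp ⟨z, hzL⟩
    have hlin1 : IsLinearMap ℝ (fun x : EuclideanSpace ℝ (Fin n) => ⟪a + v, x⟫) :=
      ⟨fun m₁ m₂ => inner_add_right _ _ _, fun c m => real_inner_smul_right _ _ _⟩
    have hlin2 : IsLinearMap ℝ (fun y : EuclideanSpace ℝ (Fin n) => ⟪a + w, y⟫) :=
      ⟨fun m₁ m₂ => inner_add_right _ _ _, fun c m => real_inner_smul_right _ _ _⟩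
    have hcont1 : Continuous (fun x : EuclideanSpace ℝ (Fin n) => ⟪a + v, x⟫) :=
      continuous_const.inner continuous_id
    have hcont2 : Continuous (fun y : EuclideanSpace ℝ (Fin n) => ⟪a + w, y⟫) :=
      continuous_const.inner continuous_id
    obtain ⟨x0, hx0K, hx0max⟩ := hK.exists_isMaxOn hKne hcont1.continuousOn
    obtain ⟨y0, hy0L, hy0min⟩ := hL.exists_isMinOn hLne hcont2.continuousOn
    have hc : ⟪a + v, x0⟫ < ⟪a + w, y0⟫ := hsep x0 hx0K y0 hy0L
    have hz1 : ⟪a + v, z⟫ ≤ ⟪a + v, x0⟫ := by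
      have hsub : convexHull ℝ K ⊆ {x | ⟪a + v, x⟫ ≤ ⟪a + v, x0⟫} :=
        convexHull_min (fun x hx => hx0max hx) (convex_halfSpace_le hlin1 _)
      exact hsub hzK
    have hz2 : ⟪a + w, y0⟫ ≤ ⟪a + w, z⟫ := by
      have hsub : convexHull ℝ L ⊆ {y | ⟪a + w, y0⟫ ≤ ⟪a + w, y⟫} :=
        convexHull_min (fun y hy => hy0min hy) (convex_halfSpace_ge hlin2 _)
      exact hsub hzL
    have e1 : ⟪a + v, z⟫ = ⟪a, z⟫ := by
      rw [inner_add_left]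
      have : ⟪v, z⟫ = 0 := by
        rw [real_inner_comm]
        exact (Submodule.mem_orthogonal U v).mp hvU z hzU
      rw [this, add_zero]
    have e2 : ⟪a + w, z⟫ = ⟪a, z⟫ := by
      rw [inner_add_left]
      have : ⟪w, z⟫ = 0 := by
        rw [real_inner_comm]
        exact (Submodule.mem_orthogonal U w).mp hwU z hzU
      rw [this, add_zero]
    rw [e1] at hz1
    rw [e2] at hz2
    linarith
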